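/- (d-dimensional version of the main theorem.) Let d ≥ 1 and let X = {0,…,l₁−1} × ⋯ × {0,…,l_d−1} ⊆ ℤ^d with each l_i a positive integer. Suppose the material is macro-homogeneous at scale r₀ and that C_{r₀} := Σ_{r : |r| > r₀} |X_r|/|X| is strictly positive. Define Ψ(ω) = (1/C_{r₀}) · Σ_{r : |r| ≤ r₀} (|X_r|/|X|) · (T_r(ω) − Φ(ω)²). Then E[Ψ] = Var[Φ]. -/

import Mathlib

open MeasureTheory Finset
open scoped Classical

/-- d-dimensional version of the main theorem. For the voxel
domain `X = Π_i {0,…,l_i−1} ⊆ ℤ^d`, under macro-homogeneity at scale `r₀` and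
`C_{r₀} > 0`, the predictor `Ψ(ω) = (1/C) Σ_{|r|≤r₀} (|X_r|/|X|)(T_r(ω) − Φ(ω)²)`
satisfies `E[Ψ] = Var[Φ]`. -/
theorem tpc_predictor_unbiased_dim
    {Ω : Type*} [MeasurableSpace Ω] (P : Measure Ω) [IsProbabilityMeasure P]
    (d : ℕ) (hd : 1 ≤ d)
    (l : Fin d → ℕ) (hl : ∀ i, 0 < l i)
    (X : Finset (Fin d → ℤ))
    (hX : X = Fintype.piFinset (fun i => Finset.Ico (0 : ℤ) ((l i : ℤ))))
    (B : (Fin d → ℤ) → Ω → ℝ)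
    (hBmeas : ∀ x, Measurable (B x))
    (hB01 : ∀ x ω, B x ω = 0 ∨ B x ω = 1)
    (Φ : Ω → ℝ)
    (hΦ : ∀ ω, Φ ω = (1 / (X.card : ℝ)) * ∑ x ∈ X, B x ω)
    (Xr : (Fin d → ℤ) → Finset (Fin d → ℤ))
    (hXr : ∀ r, Xr r = X.filter (fun x => x + r ∈ X))
    (T : (Fin d → ℤ) → Ω → ℝ)
    (hT : ∀ r ω, T r ω = (1 / ((Xr r).card : ℝ)) * ∑ x ∈ Xr r, B x ω * B (x + r) ω)
    (D : Finset (Fin d → ℤ))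
    (hD : D = (X ×ˢ X).image (fun p => p.1 - p.2))
    (r₀ : ℝ) (hr₀ : 0 < r₀)
    (hmacro : ∀ r ∈ D, r₀ < Real.sqrt (∑ i, ((r i : ℝ)) ^ 2) →
      ∫ ω, T r ω ∂P = (∫ ω, Φ ω ∂P) ^ 2)
    (C : ℝ)
    (hC : C = ∑ r ∈ D.filter (fun r => r₀ < Real.sqrt (∑ i, ((r i : ℝ)) ^ 2)),
      ((Xr r).card : ℝ) / (X.card : ℝ))
    (hCpos : 0 < C)
    (Ψ : Ω → ℝ)
    (hΨ : ∀ ω, Ψ ω = (1 / C) *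
      ∑ r ∈ D.filter (fun r => Real.sqrt (∑ i, ((r i : ℝ)) ^ 2) ≤ r₀),
        (((Xr r).card : ℝ) / (X.card : ℝ)) * (T r ω - (Φ ω) ^ 2)) :
    ∫ ω, Ψ ω ∂P = ProbabilityTheory.variance Φ P := by
  have hXne : X.Nonempty := by
    refine ⟨0, ?_⟩
    rw [hX, Fintype.mem_piFinset]
    intro i
    simp only [Finset.mem_Ico, Pi.zero_apply, le_refl, true_and]
    exact_mod_cast hl i
  have hn : (0:ℝ) < (X.card : ℝ) := by
    exact_mod_cast Finset.card_pos.mpr hXne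
  have hn' : (X.card : ℝ) ≠ 0 := ne_of_gt hn
  have hCne : C ≠ 0 := ne_of_gt hCpos
  have hB : ∀ x ω, 0 ≤ B x ω ∧ B x ω ≤ 1 := by
    intro x ω; rcases hB01 x ω with h | h <;> rw [h] <;> constructor <;> norm_num
  -- bijection lemma
  have key : ∀ f : (Fin d → ℤ) → (Fin d → ℤ) → ℝ,
      ∑ r ∈ D, ∑ x ∈ Xr r, f x (x + r) = ∑ p ∈ X ×ˢ X, f p.1 p.2 := by
    intro f
    rw [Finset.sum_sigma' D (fun r => Xr r) (fun r x => f x (x + r))]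
    refine Finset.sum_nbij' (fun q => (q.2, q.2 + q.1)) (fun p => ⟨p.2 - p.1, p.1⟩)
      ?_ ?_ ?_ ?_ ?_
    · rintro ⟨r, x⟩ hq
      simp only [Finset.mem_sigma, hXr, Finset.mem_filter] at hq
      simp [Finset.mem_product, hq.2.1, hq.2.2]
    · rintro ⟨a, b⟩ hp
      simp only [Finset.mem_product] at hp
      simp only [Finset.mem_sigma, hXr, Finset.mem_filter, hD, Finset.mem_image]
      refine ⟨⟨(b, a), by simp [Finset.mem_product, hp.1, hp.2], rfl⟩, hp.1, ?_⟩
      have hab : a + (b - a) = b := by ring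
      rw [hab]; exact hp.2
    · rintro ⟨r, x⟩ _
      have h1 : x + r - x = r := by ring
      simp [h1]
    · rintro ⟨a, b⟩ _
      have hab : a + (b - a) = b := by ring
      simp [hab]
    · rintro ⟨r, x⟩ _; rfl
  have hcardT : ∀ r ω, ((Xr r).card : ℝ) * T r ω = ∑ x ∈ Xr r, B x ω * B (x + r) ω := by
    intro r ω
    rcases eq_or_ne ((Xr r).card : ℝ) 0 with h | h
    · have he : Xr r = ∅ := by
        rwa [Nat.cast_eq_zero, Finset.card_eq_zero] at h
      simp [hT, he]
    · rw [hT r ω, ← mul_assoc, mul_one_div, div_self h, one_mul]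
  have hkey : ∀ ω, ∑ r ∈ D, ((Xr r).card : ℝ) * T r ω = (∑ x ∈ X, B x ω) ^ 2 := by
    intro ω
    calc ∑ r ∈ D, ((Xr r).card : ℝ) * T r ω
        = ∑ r ∈ D, ∑ x ∈ Xr r, B x ω * B (x + r) ω :=
          Finset.sum_congr rfl (fun r _ => hcardT r ω)
      _ = ∑ p ∈ X ×ˢ X, B p.1 ω * B p.2 ω := key (fun a b => B a ω * B b ω)
      _ = (∑ x ∈ X, B x ω) ^ 2 := by
          rw [Finset.sum_product, sq, Finset.sum_mul_sum]
  have hcardsum : ∑ r ∈ D, ((Xr r).card : ℝ) = (X.card : ℝ) ^ 2 := by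
    have h := key (fun _ _ => (1:ℝ))
    simpa [Finset.sum_const, sq, Nat.cast_mul] using h
  -- bounds
  have hΦbd : ∀ ω, Φ ω ∈ Set.Icc (0:ℝ) 1 := by
    intro ω
    rw [hΦ]
    have h0 : 0 ≤ ∑ x ∈ X, B x ω := Finset.sum_nonneg (fun x _ => (hB x ω).1)
    have h1 : ∑ x ∈ X, B x ω ≤ (X.card : ℝ) := by
      calc ∑ x ∈ X, B x ω ≤ ∑ x ∈ X, (1:ℝ) := Finset.sum_le_sum (fun x _ => (hB x ω).2)
        _ = (X.card : ℝ) := by simp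
    constructor
    · positivity
    · rw [one_div, inv_mul_le_iff₀ hn, mul_comm]
      simpa using h1
  have hTbd : ∀ r ω, T r ω ∈ Set.Icc (0:ℝ) 1 := by
    intro r ω
    rcases eq_or_ne ((Xr r).card : ℝ) 0 with h | h
    · rw [hT, h]; norm_num
    · have hc : (0:ℝ) < ((Xr r).card : ℝ) :=
        lt_of_le_of_ne (Nat.cast_nonneg _) (Ne.symm h)
      rw [hT]
      have h0 : 0 ≤ ∑ x ∈ Xr r, B x ω * B (x + r) ω :=
        Finset.sum_nonneg (fun x _ => mul_nonneg (hB x ω).1 (hB (x + r) ω).1)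
      have h1 : ∑ x ∈ Xr r, B x ω * B (x + r) ω ≤ ((Xr r).card : ℝ) := by
        calc ∑ x ∈ Xr r, B x ω * B (x + r) ω ≤ ∑ x ∈ Xr r, (1:ℝ) :=
            Finset.sum_le_sum (fun x _ =>
              mul_le_one₀ (hB x ω).2 (hB (x + r) ω).1 (hB (x + r) ω).2)
          _ = ((Xr r).card : ℝ) := by simp
      constructor
      · positivity
      · rw [one_div, inv_mul_le_iff₀ hc, mul_comm]
        simpa using h1
  -- measurability
  have hΦmeas : Measurable Φ := by
    have hfe : Φ = fun ω => (1 / (X.card : ℝ)) * ∑ x ∈ X, B x ω := funext hΦ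
    rw [hfe]
    exact (Finset.measurable_sum _ (fun x _ => hBmeas x)).const_mul _
  have hTmeas : ∀ r, Measurable (T r) := by
    intro r
    have hfe : T r = fun ω => (1 / ((Xr r).card : ℝ)) * ∑ x ∈ Xr r, B x ω * B (x + r) ω :=
      funext (hT r)
    rw [hfe]
    exact (Finset.measurable_sum _ (fun x _ => (hBmeas x).mul (hBmeas (x + r)))).const_mul _
  -- integrability
  have hint : ∀ g : Ω → ℝ, Measurable g → (∀ ω, g ω ∈ Set.Icc (0:ℝ) 1) → Integrable g P := by
    intro g hg hbd
    refine (integrable_const (1:ℝ)).mono' hg.aestronglyMeasurable (ae_of_all _ fun ω => ?_)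
    rw [Real.norm_eq_abs, abs_of_nonneg (hbd ω).1]
    exact (hbd ω).2
  have hTint : ∀ r, Integrable (T r) P := fun r => hint _ (hTmeas r) (hTbd r)
  have hΦ2bd : ∀ ω, Φ ω ^ 2 ∈ Set.Icc (0:ℝ) 1 := by
    intro ω
    exact ⟨sq_nonneg _, pow_le_one₀ (hΦbd ω).1 (hΦbd ω).2⟩
  have hΦ2int : Integrable (fun ω => Φ ω ^ 2) P :=
    hint _ (hΦmeas.pow_const 2) hΦ2bd
  -- the far set
  set F := D.filter (fun r => r₀ < Real.sqrt (∑ i, ((r i : ℝ)) ^ 2)) with hF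
  have hsplit : ∀ g : (Fin d → ℤ) → ℝ,
      ∑ r ∈ D.filter (fun r => Real.sqrt (∑ i, ((r i : ℝ)) ^ 2) ≤ r₀), g r
        = ∑ r ∈ D, g r - ∑ r ∈ F, g r := by
    intro g
    have h := Finset.sum_filter_add_sum_filter_not D
      (fun r => Real.sqrt (∑ i, ((r i : ℝ)) ^ 2) ≤ r₀) g
    have hFeq : D.filter (fun r => ¬ Real.sqrt (∑ i, ((r i : ℝ)) ^ 2) ≤ r₀) = F := by
      rw [hF]
      apply Finset.filter_congr
      intro r _
      simp [not_le]
    rw [hFeq] at h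
    linarith
  have expand : ∀ (G : Finset (Fin d → ℤ)) (ω : Ω),
      ∑ r ∈ G, (((Xr r).card : ℝ) / (X.card : ℝ)) * (T r ω - Φ ω ^ 2)
        = (∑ r ∈ G, (((Xr r).card : ℝ) / (X.card : ℝ)) * T r ω)
          - (∑ r ∈ G, ((Xr r).card : ℝ) / (X.card : ℝ)) * Φ ω ^ 2 := by
    intro G ω
    rw [Finset.sum_mul, ← Finset.sum_sub_distrib]
    exact Finset.sum_congr rfl (fun r _ => by ring)
  have eD1 : ∀ ω, ∑ r ∈ D, (((Xr r).card : ℝ) / (X.card : ℝ)) * T r ω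
      = (X.card : ℝ) * Φ ω ^ 2 := by
    intro ω
    have h1 : ∑ r ∈ D, (((Xr r).card : ℝ) / (X.card : ℝ)) * T r ω
        = (1 / (X.card : ℝ)) * ∑ r ∈ D, ((Xr r).card : ℝ) * T r ω := by
      rw [Finset.mul_sum]
      exact Finset.sum_congr rfl (fun r _ => by ring)
    rw [h1, hkey ω, hΦ]
    field_simp
  have eD2 : ∑ r ∈ D, ((Xr r).card : ℝ) / (X.card : ℝ) = (X.card : ℝ) := by
    rw [← Finset.sum_div, hcardsum, sq, mul_div_assoc, div_self hn', mul_one]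
  -- pointwise formula for Ψ
  have hΨ' : ∀ ω, Ψ ω = Φ ω ^ 2
      - (1 / C) * ∑ r ∈ F, (((Xr r).card : ℝ) / (X.card : ℝ)) * T r ω := by
    intro ω
    rw [hΨ, hsplit, expand D ω, expand F ω, eD1 ω, eD2, ← hC]
    field_simp
    ring
  -- integrate
  have hAint : Integrable (fun ω => ∑ r ∈ F, (((Xr r).card : ℝ) / (X.card : ℝ)) * T r ω) P :=
    integrable_finset_sum F (fun r _ => (hTint r).const_mul _)
  have hI : ∫ ω, Ψ ω ∂P
      = (∫ ω, Φ ω ^ 2 ∂P)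
        - (1 / C) * ∫ ω, (∑ r ∈ F, (((Xr r).card : ℝ) / (X.card : ℝ)) * T r ω) ∂P := by
    rw [show (fun ω => Ψ ω) = fun ω => Φ ω ^ 2
        - (1 / C) * ∑ r ∈ F, (((Xr r).card : ℝ) / (X.card : ℝ)) * T r ω from funext hΨ']
    rw [integral_sub hΦ2int (hAint.const_mul _), integral_const_mul]
  have hFar : ∫ ω, (∑ r ∈ F, (((Xr r).card : ℝ) / (X.card : ℝ)) * T r ω) ∂P
      = C * (∫ ω, Φ ω ∂P) ^ 2 := by
    rw [integral_finset_sum F (fun r _ => (hTint r).const_mul _)]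
    have h1 : ∀ r ∈ F, ∫ ω, (((Xr r).card : ℝ) / (X.card : ℝ)) * T r ω ∂P
        = (((Xr r).card : ℝ) / (X.card : ℝ)) * (∫ ω, Φ ω ∂P) ^ 2 := by
      intro r hr
      rw [integral_const_mul]
      have hrD := Finset.mem_filter.mp hr
      rw [hmacro r hrD.1 hrD.2]
    rw [Finset.sum_congr rfl h1, ← Finset.sum_mul, ← hC]
  rw [hI, hFar]
  have hmem : MemLp Φ 2 P :=
    memLp_of_bounded (ae_of_all _ hΦbd) hΦmeas.aestronglyMeasurable 2
  rw [ProbabilityTheory.variance_eq_sub hmem]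
  have : (1 / C) * (C * (∫ ω, Φ ω ∂P) ^ 2) = (∫ ω, Φ ω ∂P) ^ 2 := by
    field_simp
  rw [this]
  simp [Pi.pow_apply]
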